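/- arXiv:1506.06436 — 2 statements merged into one kernel-verified Lean document; each statement's English description precedes it below -/
import Mathlib

section
/- With Λ = λ(1) = (1 − z + z² + z³ − √(1 − 2z − z² − z⁴ + 2z⁵ + z⁶))/(2z), the kernel M(u,v) = 1 − zuv(1−z²)/((v−zu)(u−zv)) vanishes along the substitution v = uΛ, i.e. M(u,uΛ) = 0 as an identity of formal power series; by the symmetry M(u,v) = M(v,u) it also vanishes at (u,v) = (vΛ,v). -/
namespace PrudentAdsorption

/-- A point of the square lattice `ℤ²`. -/
abbrev Pt : Type := ℤ × ℤ

/-- Nearest-neighbour adjacency on the square lattice. -/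
def adj (p q : Pt) : Prop := (q.1 - p.1).natAbs + (q.2 - p.2).natAbs = 1

/-- An `n`-step nearest-neighbour walk on `ℤ²` starting at the origin. -/
structure Walk (n : ℕ) where
  pts : Fin (n + 1) → Pt
  start_eq : pts 0 = (0, 0)
  adj_step : ∀ k : Fin n, adj (pts k.castSucc) (pts k.succ)

namespace Walk

variable {n : ℕ}

/-- The `x`-coordinates of the prefix of the walk up to time `k`. -/
def xset (W : Walk n) (k : Fin (n + 1)) : Finset ℤ :=
  (Finset.Iic k).image fun m => (W.pts m).1

/-- The `y`-coordinates of the prefix of the walk up to time `k`. -/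
def yset (W : Walk n) (k : Fin (n + 1)) : Finset ℤ :=
  (Finset.Iic k).image fun m => (W.pts m).2

lemma xset_nonempty (W : Walk n) (k : Fin (n + 1)) : (W.xset k).Nonempty :=
  ⟨(W.pts k).1, Finset.mem_image.2 ⟨k, Finset.mem_Iic.2 le_rfl, rfl⟩⟩

lemma yset_nonempty (W : Walk n) (k : Fin (n + 1)) : (W.yset k).Nonempty :=
  ⟨(W.pts k).2, Finset.mem_image.2 ⟨k, Finset.mem_Iic.2 le_rfl, rfl⟩⟩

/-- Right side of the bounding box of the prefix up to time `k`. -/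
def xmax (W : Walk n) (k : Fin (n + 1)) : ℤ := (W.xset k).max' (W.xset_nonempty k)

/-- Left (west) side of the bounding box of the prefix up to time `k`. -/
def xmin (W : Walk n) (k : Fin (n + 1)) : ℤ := (W.xset k).min' (W.xset_nonempty k)

/-- Top (north) side of the bounding box of the prefix up to time `k`. -/
def ymax (W : Walk n) (k : Fin (n + 1)) : ℤ := (W.yset k).max' (W.yset_nonempty k)

/-- Bottom (south) side of the bounding box of the prefix up to time `k`. -/
def ymin (W : Walk n) (k : Fin (n + 1)) : ℤ := (W.yset k).min' (W.yset_nonempty k)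

/-- Endpoint of the walk. -/
def endPt (W : Walk n) : Pt := W.pts (Fin.last n)

/-- A walk is prudent if it never takes a step towards an already visited vertex:
the half-line extending each step contains no previously visited vertex. -/
def Prudent (W : Walk n) : Prop :=
  ∀ k : Fin n, ∀ t : ℤ, 1 ≤ t → ∀ m : Fin (n + 1), m ≤ k.castSucc →
    W.pts m ≠ W.pts k.castSucc + t • (W.pts k.succ - W.pts k.castSucc)

/-- The walk stays in the half-plane `y ≥ 0` above the impenetrable surface. -/
def HalfPlane (W : Walk n) : Prop := ∀ m : Fin (n + 1), 0 ≤ (W.pts m).2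

/-- A walk is 2-sided if every prefix ends on the north or east side of
its bounding box. -/
def TwoSided (W : Walk n) : Prop :=
  ∀ k : Fin (n + 1), (W.pts k).2 = W.ymax k ∨ (W.pts k).1 = W.xmax k

/-- Every prefix ends on the north, east or west side of its bounding box. -/
def ThreeSidedEnds (W : Walk n) : Prop :=
  ∀ k : Fin (n + 1), (W.pts k).2 = W.ymax k ∨ (W.pts k).1 = W.xmax k ∨
    (W.pts k).1 = W.xmin k

/-- The walk never steps between the SE and SW corners of its (current) bounding
box when the box has width one. -/
def NoBaseStep (W : Walk n) : Prop :=
  ∀ k : Fin n,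
    ¬(W.xmax k.succ = W.xmin k.succ + 1 ∧
      (W.pts k.castSucc).2 = W.ymin k.succ ∧ (W.pts k.succ).2 = W.ymin k.succ ∧
      (((W.pts k.castSucc).1 = W.xmin k.succ ∧ (W.pts k.succ).1 = W.xmax k.succ) ∨
        ((W.pts k.castSucc).1 = W.xmax k.succ ∧ (W.pts k.succ).1 = W.xmin k.succ)))

/-- A walk is 3-sided if every prefix ends on the north, east or west side
of its bounding box, and it never steps between the SE and SW corners of the
box when the box has width one. -/
def ThreeSided (W : Walk n) : Prop := W.ThreeSidedEnds ∧ W.NoBaseStep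

/-- The number of steps of the walk lying along the surface `y = 0`. -/
def surfSteps (W : Walk n) : ℕ :=
  (Finset.univ.filter fun k : Fin n =>
    (W.pts k.castSucc).2 = 0 ∧ (W.pts k.succ).2 = 0).card

end Walk

/-- A 2-sided prudent walk above the impenetrable surface. -/
def Is2Sided {n : ℕ} (W : Walk n) : Prop := W.Prudent ∧ W.HalfPlane ∧ W.TwoSided

/-- A 3-sided prudent walk above the impenetrable surface. -/
def Is3Sided {n : ℕ} (W : Walk n) : Prop := W.Prudent ∧ W.HalfPlane ∧ W.ThreeSided

/-- `R_{n,i,j,ν}`: number of `n`-step 2-sided prudent walks above the surface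
ending on the right side of their bounding box, with `i` the distance from the
endpoint to the top of the box, `j` the height of the endpoint above the
surface and `ν` steps along the surface. -/
noncomputable def Rcount (n i j ν : ℕ) : ℕ :=
  Nat.card {W : Walk n // Is2Sided W ∧ (W.endPt).1 = W.xmax (Fin.last n) ∧
    W.ymax (Fin.last n) - (W.endPt).2 = (i : ℤ) ∧ (W.endPt).2 = (j : ℤ) ∧
    W.surfSteps = ν}

/-- `T_{n,i,j,ν}`: number of `n`-step 2-sided prudent walks above the surface
ending on the top side of their bounding box, with `i` the distance from the
endpoint to the right of the box, `j` the height of the endpoint above the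
surface and `ν` steps along the surface. -/
noncomputable def Tcount (n i j ν : ℕ) : ℕ :=
  Nat.card {W : Walk n // Is2Sided W ∧ (W.endPt).2 = W.ymax (Fin.last n) ∧
    W.xmax (Fin.last n) - (W.endPt).1 = (i : ℤ) ∧ (W.endPt).2 = (j : ℤ) ∧
    W.surfSteps = ν}

/-- `W_{n,i,j,ν}`: number of `n`-step 2-sided prudent walks above the surface
ending a distance `i` from the NE corner of their bounding box and a distance
`j` above the surface, with `ν` steps along the surface. -/
noncomputable def Wcount (n i j ν : ℕ) : ℕ :=
  Nat.card {W : Walk n // Is2Sided W ∧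
    (W.xmax (Fin.last n) - (W.endPt).1) + (W.ymax (Fin.last n) - (W.endPt).2) = (i : ℤ) ∧
    (W.endPt).2 = (j : ℤ) ∧ W.surfSteps = ν}

/-- The coefficient ring `ℤ[u,v,a]`. -/
abbrev A : Type := MvPolynomial (Fin 3) ℤ

/-- The ring of formal power series `ℤ[u,v,a][[z]]`. -/
abbrev S : Type := PowerSeries A

/-- The series variable `z` (conjugate to the length). -/
noncomputable def zS : S := PowerSeries.X

/-- The catalytic variable `u`. -/
noncomputable def uS : S := PowerSeries.C (R := A) (MvPolynomial.X 0)

/-- The catalytic variable `v`. -/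
noncomputable def vS : S := PowerSeries.C (R := A) (MvPolynomial.X 1)

/-- The surface fugacity `a`. -/
noncomputable def aS : S := PowerSeries.C (R := A) (MvPolynomial.X 2)

/-- Generating function `Σ c(n,i,j,ν) zⁿ Uⁱ Vʲ aᵛ` of a family of counts, with
the catalytic variables evaluated at power series `U`, `V`.  (Counts of `n`-step
walks vanish unless `i,j,ν ≤ n`, so the inner sums may be truncated at `n`, and
the coefficient of `zᵐ` only receives contributions from `n ≤ m`.) -/
noncomputable def gf2 (c : ℕ → ℕ → ℕ → ℕ → ℕ) (U V : S) : S :=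
  PowerSeries.mk fun m =>
    PowerSeries.coeff (R := A) m <|
      ∑ n ∈ Finset.range (m + 1), (PowerSeries.X : S) ^ n *
        ∑ i ∈ Finset.range (n + 1), ∑ j ∈ Finset.range (n + 1),
          ∑ ν ∈ Finset.range (n + 1),
            (c n i j ν : S) * U ^ i * V ^ j * aS ^ ν

/-- `R(U,V)`, the generating function of 2-sided prudent walks above the
surface ending on the right side of their bounding box. -/
noncomputable def Rgf (U V : S) : S := gf2 Rcount U V

/-- `T(U,V)`, the generating function of 2-sided prudent walks above the
surface ending on the top side of their bounding box. -/
noncomputable def Tgf (U V : S) : S := gf2 Tcount U V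

/-- `W(U,V)`, the generating function of all 2-sided prudent walks above the
surface, with `U` marking the distance from the endpoint to the NE corner. -/
noncomputable def Wgf (U V : S) : S := gf2 Wcount U V

/-- `c(v) = 1 + z² − zv + z³v`, so that the kernel quadratic is
`zX² − c(v)X + z = 0`. -/
noncomputable def ck (V : S) : S := 1 + zS ^ 2 - zS * V + zS ^ 3 * V

/-- `λ(v)`: the unique formal power series root of `zX² − c(v)X + z = 0`
(defined as `0` if no such root exists). -/
noncomputable def lam (V : S) : S :=
  open scoped Classical in
  if h : ∃ X : S, zS * X ^ 2 - ck V * X + zS = 0 then h.choose else 0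

/-- `Λ = λ(1)`. -/
noncomputable def Lam : S := lam 1

/-- Numerator of the kernel `L(u,v) = 1 − zuv(1−z²)/((u−z)(1−zu))` after
clearing the denominator `(u−z)(1−zu)`. -/
noncomputable def Ln (U V : S) : S := (U - zS) * (1 - zS * U) - zS * U * V * (1 - zS ^ 2)

/-- Numerator of the kernel `M(u,v) = 1 − zuv(1−z²)/((v−zu)(u−zv))` after
clearing the denominator `(v−zu)(u−zv)`. -/
noncomputable def Mn (U V : S) : S := (V - zS * U) * (U - zS * V) - zS * U * V * (1 - zS ^ 2)

/-- Numerator of `A(u,v)`. -/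
noncomputable def An (U V : S) : S :=
  V * (U - zS ^ 2 * U - zS * U * lam V * aS + zS ^ 2 * V * lam V * aS)

/-- Denominator of `A(u,v)`, namely `(u−zv)(v−zu)(1−zλ(v)a)`. -/
noncomputable def Ad (U V : S) : S := (U - zS * V) * (V - zS * U) * (1 - zS * lam V * aS)

/-- Numerator of `B(u,v)`. -/
noncomputable def Bn (U V : S) : S :=
  -(zS * U) * (U + V - zS * V - zS ^ 2 * V - V * aS + zS ^ 2 * V * aS)

/-- Denominator of `B(u,v)`, namely `(u−zv)(v−zu)`. -/
noncomputable def Bd (U V : S) : S := (U - zS * V) * (V - zS * U)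

/-- Numerator of `C(u,v)`. -/
noncomputable def Cn (U V : S) : S := -(zS * V) * (zS * U - U * lam V + zS * V * lam V)

/-- Denominator of `C(u,v)`, namely `(λ(v)−z)(u−zv)`. -/
noncomputable def Cd (U V : S) : S := (lam V - zS) * (U - zS * V)

/-- `𝒥(a) = 1 + Λ − zΛ − z²Λ − Λa + z²Λa`. -/
noncomputable def Jc : S := 1 + Lam - zS * Lam - zS ^ 2 * Lam - Lam * aS + zS ^ 2 * Lam * aS

/-- Numerator of `ℋ(q)`. -/
noncomputable def Hnum (q : S) : S :=
  (1 - zS ^ 2) * (1 - Lam ^ 2) *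
    (1 - zS * aS * (1 + zS) * lam (q * Lam) + zS * aS * lam (q * Lam) ^ 2)

/-- Denominator of `ℋ(q)`, including the factor `𝒥(a)`. -/
noncomputable def Hden (q : S) : S :=
  Jc * ((1 - zS * Lam) * (1 - zS * aS * lam (q * Lam)) *
    (1 - (1 - zS - zS ^ 2 + Lam) * lam (q * Lam)))

/-- Numerator of `ℐ(q)`. -/
noncomputable def Inum (q : S) : S :=
  (Lam - zS) * (1 - zS - zS ^ 2 - aS + zS ^ 2 * aS + Lam) *
    (zS - (1 - zS * Lam) * lam (q * Lam))

/-- Denominator of `ℐ(q)`, including the factor `𝒥(a)`. -/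
noncomputable def Iden (q : S) : S :=
  Jc * (zS * (1 - zS * Lam) * (1 - (1 - zS - zS ^ 2 + Lam) * lam (q * Lam)))

end PrudentAdsorption


namespace PrudentAdsorption

open PowerSeries

/-- `c(1) = 1 + z² − z + z³`. -/
noncomputable def cS : S := ck 1

lemma constantCoeff_cS : constantCoeff cS = 1 := by
  simp [cS, ck, zS]

/-- Inverse of `c(1)` (constant coefficient is a unit). -/
noncomputable def ciS : S := invOfUnit cS 1

lemma cS_mul_ciS : cS * ciS = 1 :=
  PowerSeries.mul_invOfUnit cS 1 (by simp [constantCoeff_cS])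

lemma coeff_aux_congr {F G : S} {n : ℕ} (h : ∀ k < n, coeff k F = coeff k G) :
    coeff n (ciS * (1 + zS ^ 2 * F ^ 2)) = coeff n (ciS * (1 + zS ^ 2 * G ^ 2)) := by
  have key : ∀ m ≤ n, coeff m (zS ^ 2 * F ^ 2) = coeff m (zS ^ 2 * G ^ 2) := by
    intro m hm
    rw [zS, sq (F), sq (G), coeff_mul, coeff_mul]
    refine Finset.sum_congr rfl fun p hp => ?_
    rw [Finset.HasAntidiagonal.mem_antidiagonal] at hp
    by_cases h2 : p.1 = 2
    · have hp2 : p.2 < n := by omega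
      congr 1
      rw [coeff_mul, coeff_mul]
      refine Finset.sum_congr rfl fun q hq => ?_
      rw [Finset.HasAntidiagonal.mem_antidiagonal] at hq
      rw [h q.1 (by omega), h q.2 (by omega)]
    · simp [coeff_X_pow, h2]
  rw [coeff_mul, coeff_mul]
  refine Finset.sum_congr rfl fun p hp => ?_
  rw [Finset.HasAntidiagonal.mem_antidiagonal] at hp
  simp only [map_add]
  rw [key p.2 (by omega)]

/-- Coefficients of the solution `Y` of `Y = c⁻¹(1 + z²Y²)`. -/
noncomputable def ycoef : ℕ → A
  | n => coeff n (ciS * (1 + zS ^ 2 *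
      (PowerSeries.mk (fun k => if h : k < n then ycoef k else 0)) ^ 2))
  termination_by n => n
  decreasing_by exact h

/-- The solution of `Y = c⁻¹(1 + z²Y²)`. -/
noncomputable def Ysol : S := PowerSeries.mk ycoef

lemma Ysol_eq : Ysol = ciS * (1 + zS ^ 2 * Ysol ^ 2) := by
  refine PowerSeries.ext fun n => ?_
  rw [Ysol, coeff_mk, ycoef]
  exact coeff_aux_congr fun k hk => by rw [coeff_mk, coeff_mk, dif_pos hk]

lemma root_exists : ∃ X : S, zS * X ^ 2 - ck 1 * X + zS = 0 := by
  refine ⟨zS * Ysol, ?_⟩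
  have h1 : cS * Ysol = 1 + zS ^ 2 * Ysol ^ 2 := by
    conv_lhs => rw [Ysol_eq]
    rw [← mul_assoc, cS_mul_ciS, one_mul]
  have h2 : zS * (zS * Ysol) ^ 2 - ck 1 * (zS * Ysol) + zS
      = zS * ((1 + zS ^ 2 * Ysol ^ 2) - cS * Ysol) := by
    rw [cS]; ring
  rw [h2, h1]; ring

lemma Lam_spec : zS * Lam ^ 2 - ck 1 * Lam + zS = 0 := by
  rw [Lam, lam, dif_pos root_exists]
  exact root_exists.choose_spec

end PrudentAdsorption


namespace PrudentAdsorption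

/-- With `Λ = λ(1)`, the kernel `M(u,v)` vanishes along the
substitution `v = uΛ` (after clearing denominators, `Mn(u,uΛ) = 0`); `M` is
symmetric, `M(u,v) = M(v,u)`, and hence it also vanishes at `(u,v) = (vΛ,v)`. -/
theorem kernel_M_vanishes :
    Mn uS (uS * Lam) = 0 ∧ (∀ U V : S, Mn U V = Mn V U) ∧
    Mn (vS * Lam) vS = 0 := by
  refine ⟨?_, fun U V => by simp only [Mn]; ring, ?_⟩
  · have h := Lam_spec
    have e : Mn uS (uS * Lam) = -(uS ^ 2) * (zS * Lam ^ 2 - ck 1 * Lam + zS) := by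
      simp only [Mn, ck]; ring
    rw [e, h, mul_zero]
  · have h := Lam_spec
    have e : Mn (vS * Lam) vS = -(vS ^ 2) * (zS * Lam ^ 2 - ck 1 * Lam + zS) := by
      simp only [Mn, ck]; ring
    rw [e, h, mul_zero]


end PrudentAdsorption
end

section
/- Every prudent walk on ℤ² that starts at a point on the line y = 0 and is confined to the half-plane y ≥ 0 ends on the north, east or west side of its bounding box; that is, its endpoint is never strictly in the interior of the south side of the bounding box. In particular, every 4-sided prudent walk above an impenetrable surface is also a 3-sided prudent walk. -/
namespace PrudentAdsorption


section Aux

variable {n : ℕ}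

/-- Discrete intermediate value theorem for `ℤ`-valued sequences with steps of
size at most one. -/
lemma ivt_nat (f : ℕ → ℤ) (hf : ∀ i, (f (i + 1) - f i).natAbs ≤ 1)
    (a b : ℕ) (hab : a ≤ b) (c : ℤ) (h1 : f a ≤ c) (h2 : c ≤ f b) :
    ∃ j, a ≤ j ∧ j ≤ b ∧ f j = c := by
  revert h2
  induction b, hab using Nat.le_induction with
  | base => exact fun h2 => ⟨a, le_rfl, le_rfl, le_antisymm h1 h2⟩
  | succ b hab ih =>
    intro h2
    by_cases hc : c ≤ f b
    · obtain ⟨j, hj1, hj2, hj3⟩ := ih hc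
      exact ⟨j, hj1, by omega, hj3⟩
    · have hb := hf b
      refine ⟨b + 1, by omega, le_rfl, by omega⟩

lemma selfAvoid {W : Walk n} (hP : W.Prudent) {j k : Fin (n + 1)} (h : j < k) :
    W.pts j ≠ W.pts k := by
  have hjk : j.val < k.val := h
  have hkn := k.isLt
  set k' : Fin n := ⟨k.val - 1, by omega⟩ with hk'def
  have hsucc : k'.succ = k := by
    apply Fin.ext
    simp [Fin.val_succ, hk'def]
    omega
  have hle : j ≤ k'.castSucc := by
    rw [Fin.le_def]
    simp [hk'def]
    omega
  intro he
  apply hP k' 1 le_rfl j hle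
  rw [hsucc, one_smul, he]
  abel

lemma prudent_hit {W : Walk n} (hP : W.Prudent) (k : Fin n) {t : ℤ} (ht : 1 ≤ t)
    {m : Fin (n + 1)} (hm : m ≤ k.castSucc)
    (h1 : (W.pts m).1 = (W.pts k.castSucc).1 + t * ((W.pts k.succ).1 - (W.pts k.castSucc).1))
    (h2 : (W.pts m).2 = (W.pts k.castSucc).2 + t * ((W.pts k.succ).2 - (W.pts k.castSucc).2)) :
    False := by
  apply hP k t ht m hm
  have e1 : (W.pts k.castSucc + t • (W.pts k.succ - W.pts k.castSucc)).1
      = (W.pts k.castSucc).1 + t * ((W.pts k.succ).1 - (W.pts k.castSucc).1) := by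
    simp [Prod.fst_add, Prod.smul_fst, Prod.fst_sub, smul_eq_mul]
  have e2 : (W.pts k.castSucc + t • (W.pts k.succ - W.pts k.castSucc)).2
      = (W.pts k.castSucc).2 + t * ((W.pts k.succ).2 - (W.pts k.castSucc).2) := by
    simp [Prod.snd_add, Prod.smul_snd, Prod.snd_sub, smul_eq_mul]
  apply Prod.ext <;> omega

lemma mem_xset {W : Walk n} {m k : Fin (n + 1)} (h : m ≤ k) :
    (W.pts m).1 ∈ W.xset k :=
  Finset.mem_image.2 ⟨m, Finset.mem_Iic.2 h, rfl⟩

lemma mem_yset {W : Walk n} {m k : Fin (n + 1)} (h : m ≤ k) :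
    (W.pts m).2 ∈ W.yset k :=
  Finset.mem_image.2 ⟨m, Finset.mem_Iic.2 h, rfl⟩

lemma le_xmax {W : Walk n} {m k : Fin (n + 1)} (h : m ≤ k) :
    (W.pts m).1 ≤ W.xmax k :=
  Finset.le_max' _ _ (mem_xset h)

lemma xmin_le {W : Walk n} {m k : Fin (n + 1)} (h : m ≤ k) :
    W.xmin k ≤ (W.pts m).1 :=
  Finset.min'_le _ _ (mem_xset h)

lemma le_ymax {W : Walk n} {m k : Fin (n + 1)} (h : m ≤ k) :
    (W.pts m).2 ≤ W.ymax k :=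
  Finset.le_max' _ _ (mem_yset h)

lemma exists_xmax (W : Walk n) (k : Fin (n + 1)) :
    ∃ m, m ≤ k ∧ (W.pts m).1 = W.xmax k := by
  have h := Finset.max'_mem (W.xset k) (W.xset_nonempty k)
  obtain ⟨m, hm, he⟩ := Finset.mem_image.1 h
  exact ⟨m, Finset.mem_Iic.1 hm, he⟩

lemma exists_xmin (W : Walk n) (k : Fin (n + 1)) :
    ∃ m, m ≤ k ∧ (W.pts m).1 = W.xmin k := by
  have h := Finset.min'_mem (W.xset k) (W.xset_nonempty k)
  obtain ⟨m, hm, he⟩ := Finset.mem_image.1 h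
  exact ⟨m, Finset.mem_Iic.1 hm, he⟩

lemma exists_ymax (W : Walk n) (k : Fin (n + 1)) :
    ∃ m, m ≤ k ∧ (W.pts m).2 = W.ymax k := by
  have h := Finset.max'_mem (W.yset k) (W.yset_nonempty k)
  obtain ⟨m, hm, he⟩ := Finset.mem_image.1 h
  exact ⟨m, Finset.mem_Iic.1 hm, he⟩

lemma le_succ_iff' {k : Fin n} {m : Fin (n + 1)} :
    m ≤ k.succ ↔ m ≤ k.castSucc ∨ m = k.succ := by
  simp only [Fin.le_def, Fin.ext_iff, Fin.val_succ, Fin.coe_castSucc]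
  omega

lemma xset_succ (W : Walk n) (k : Fin n) :
    W.xset k.succ = insert (W.pts k.succ).1 (W.xset k.castSucc) := by
  ext z
  simp only [Walk.xset, Finset.mem_image, Finset.mem_insert, Finset.mem_Iic]
  constructor
  · rintro ⟨m, hm, rfl⟩
    rcases le_succ_iff'.1 hm with h | rfl
    · exact Or.inr ⟨m, h, rfl⟩
    · exact Or.inl rfl
  · rintro (rfl | ⟨m, hm, rfl⟩)
    · exact ⟨k.succ, le_rfl, rfl⟩
    · exact ⟨m, le_succ_iff'.2 (Or.inl hm), rfl⟩

lemma yset_succ (W : Walk n) (k : Fin n) :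
    W.yset k.succ = insert (W.pts k.succ).2 (W.yset k.castSucc) := by
  ext z
  simp only [Walk.yset, Finset.mem_image, Finset.mem_insert, Finset.mem_Iic]
  constructor
  · rintro ⟨m, hm, rfl⟩
    rcases le_succ_iff'.1 hm with h | rfl
    · exact Or.inr ⟨m, h, rfl⟩
    · exact Or.inl rfl
  · rintro (rfl | ⟨m, hm, rfl⟩)
    · exact ⟨k.succ, le_rfl, rfl⟩
    · exact ⟨m, le_succ_iff'.2 (Or.inl hm), rfl⟩

lemma xmax_succ (W : Walk n) (k : Fin n) :
    W.xmax k.succ = max (W.xmax k.castSucc) (W.pts k.succ).1 := by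
  apply le_antisymm
  · apply Finset.max'_le
    intro z hz
    rw [xset_succ] at hz
    rcases Finset.mem_insert.1 hz with rfl | hz
    · exact le_max_right _ _
    · exact le_trans (Finset.le_max' _ _ hz) (le_max_left _ _)
  · apply max_le
    · apply Finset.max'_le
      intro z hz
      apply Finset.le_max'
      rw [xset_succ]
      exact Finset.mem_insert_of_mem hz
    · apply Finset.le_max'
      rw [xset_succ]
      exact Finset.mem_insert_self _ _

lemma xmin_succ (W : Walk n) (k : Fin n) :
    W.xmin k.succ = min (W.xmin k.castSucc) (W.pts k.succ).1 := by
  apply le_antisymm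
  · apply le_min
    · apply Finset.le_min'
      intro z hz
      apply Finset.min'_le
      rw [xset_succ]
      exact Finset.mem_insert_of_mem hz
    · apply Finset.min'_le
      rw [xset_succ]
      exact Finset.mem_insert_self _ _
  · apply Finset.le_min'
    intro z hz
    rw [xset_succ] at hz
    rcases Finset.mem_insert.1 hz with rfl | hz
    · exact min_le_right _ _
    · exact le_trans (min_le_left _ _) (Finset.min'_le _ _ hz)

lemma ymax_succ (W : Walk n) (k : Fin n) :
    W.ymax k.succ = max (W.ymax k.castSucc) (W.pts k.succ).2 := by
  apply le_antisymm
  · apply Finset.max'_le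
    intro z hz
    rw [yset_succ] at hz
    rcases Finset.mem_insert.1 hz with rfl | hz
    · exact le_max_right _ _
    · exact le_trans (Finset.le_max' _ _ hz) (le_max_left _ _)
  · apply max_le
    · apply Finset.max'_le
      intro z hz
      apply Finset.le_max'
      rw [yset_succ]
      exact Finset.mem_insert_of_mem hz
    · apply Finset.le_max'
      rw [yset_succ]
      exact Finset.mem_insert_self _ _

lemma ymax_zero (W : Walk n) : W.ymax 0 = 0 := by
  apply le_antisymm
  · apply Finset.max'_le
    intro z hz
    obtain ⟨m, hm, rfl⟩ := Finset.mem_image.1 hz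
    have hm0 : m = 0 := le_antisymm (Finset.mem_Iic.1 hm) (Fin.zero_le m)
    rw [hm0, W.start_eq]
  · have h := le_ymax (W := W) (le_refl (0 : Fin (n + 1)))
    rw [W.start_eq] at h
    exact h

lemma xmax_zero (W : Walk n) : W.xmax 0 = 0 := by
  apply le_antisymm
  · apply Finset.max'_le
    intro z hz
    obtain ⟨m, hm, rfl⟩ := Finset.mem_image.1 hz
    have hm0 : m = 0 := le_antisymm (Finset.mem_Iic.1 hm) (Fin.zero_le m)
    rw [hm0, W.start_eq]
  · have h := le_xmax (W := W) (le_refl (0 : Fin (n + 1)))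
    rw [W.start_eq] at h
    exact h

lemma xmin_zero (W : Walk n) : W.xmin 0 = 0 := by
  apply le_antisymm
  · have h := xmin_le (W := W) (le_refl (0 : Fin (n + 1)))
    rw [W.start_eq] at h
    exact h
  · apply Finset.le_min'
    intro z hz
    obtain ⟨m, hm, rfl⟩ := Finset.mem_image.1 hz
    have hm0 : m = 0 := le_antisymm (Finset.mem_Iic.1 hm) (Fin.zero_le m)
    rw [hm0, W.start_eq]

lemma crossing (W : Walk n) (g : Pt → ℤ)
    (hg : ∀ k : Fin n, (g (W.pts k.succ) - g (W.pts k.castSucc)).natAbs ≤ 1)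
    (m m' : Fin (n + 1)) (c : ℤ) (h1 : g (W.pts m) ≤ c) (h2 : c ≤ g (W.pts m')) :
    ∃ j : Fin (n + 1), (j ≤ m ∨ j ≤ m') ∧ g (W.pts j) = c := by
  set f : ℕ → ℤ := fun i => g (W.pts ⟨min i n, by omega⟩) with hfdef
  have fval : ∀ m : Fin (n + 1), f m.val = g (W.pts m) := by
    intro m
    have hm := m.isLt
    have : (⟨min m.val n, by omega⟩ : Fin (n + 1)) = m := Fin.ext (by simp; omega)
    rw [hfdef]
    simp only
    rw [this]
  have hstep : ∀ i, (f (i + 1) - f i).natAbs ≤ 1 := by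
    intro i
    by_cases hi : i < n
    · have h := hg ⟨i, hi⟩
      have e1 : (⟨min i n, by omega⟩ : Fin (n + 1)) = (⟨i, hi⟩ : Fin n).castSucc :=
        Fin.ext (by simp [Fin.coe_castSucc]; omega)
      have e2 : (⟨min (i + 1) n, by omega⟩ : Fin (n + 1)) = (⟨i, hi⟩ : Fin n).succ :=
        Fin.ext (by simp [Fin.val_succ]; omega)
      rw [hfdef]
      simp only
      rw [e1, e2]
      exact h
    · have e : min i n = min (i + 1) n := by omega
      rw [hfdef]
      simp only [e, sub_self]
      simp
  rcases le_total m m' with hmm | hmm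
  · obtain ⟨j, hj1, hj2, hj3⟩ := ivt_nat f hstep m.val m'.val hmm c
      (by rw [fval]; exact h1) (by rw [fval]; exact h2)
    have hjn : j < n + 1 := lt_of_le_of_lt hj2 m'.isLt
    refine ⟨⟨j, hjn⟩, Or.inr (by rw [Fin.le_def]; exact hj2), ?_⟩
    have := fval ⟨j, hjn⟩
    simp only at this
    rw [← this]
    exact hj3
  · obtain ⟨j, hj1, hj2, hj3⟩ := ivt_nat (fun i => -f i)
      (by intro i
          show (-f (i + 1) - -f i).natAbs ≤ 1
          have := hstep i; omega) m'.val m.val hmm (-c)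
      (by simp only [neg_le_neg_iff]; rw [fval]; exact h2)
      (by simp only [neg_le_neg_iff]; rw [fval]; exact h1)
    have hjn : j < n + 1 := lt_of_le_of_lt hj2 m.isLt
    refine ⟨⟨j, hjn⟩, Or.inl (by rw [Fin.le_def]; exact hj2), ?_⟩
    have := fval ⟨j, hjn⟩
    simp only at this
    have hj3' : -f j = -c := hj3
    omega

end Aux

/-- Every prudent walk on `ℤ²` starting on the line `y = 0`
and confined to the half-plane `y ≥ 0` ends on the north, east or west side of
its bounding box (its endpoint is never strictly in the interior of the south
side).  The same applies to every prefix, so every 4-sided prudent walk above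
an impenetrable surface also ends on the north, east or west side of its
bounding box at every step, as a 3-sided prudent walk does. -/
theorem halfplane_prudent_ends_north_east_west {n : ℕ} (W : Walk n)
    (hP : W.Prudent) (hH : W.HalfPlane) :
    ((W.endPt).2 = W.ymax (Fin.last n) ∨ (W.endPt).1 = W.xmax (Fin.last n) ∨
      (W.endPt).1 = W.xmin (Fin.last n)) ∧
    W.ThreeSidedEnds := by
  have h01 : (W.pts 0).1 = 0 := by rw [W.start_eq]
  have h02 : (W.pts 0).2 = 0 := by rw [W.start_eq]
  have hgx : ∀ k' : Fin n, ((W.pts k'.succ).1 - (W.pts k'.castSucc).1).natAbs ≤ 1 := by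
    intro k'
    have := W.adj_step k'
    rw [adj] at this
    omega
  have hgy : ∀ k' : Fin n, ((W.pts k'.succ).2 - (W.pts k'.castSucc).2).natAbs ≤ 1 := by
    intro k'
    have := W.adj_step k'
    rw [adj] at this
    omega
  have key : W.ThreeSidedEnds := by
    intro k
    induction k using Fin.induction with
    | zero => exact Or.inl (by rw [ymax_zero, W.start_eq])
    | succ k ih =>
      have hadj := W.adj_step k
      rw [adj] at hadj
      have hQ2 : (0:ℤ) ≤ (W.pts k.succ).2 := hH _
      have hP2 : (0:ℤ) ≤ (W.pts k.castSucc).2 := hH _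
      have hPX : (W.pts k.castSucc).1 ≤ W.xmax k.castSucc := le_xmax le_rfl
      have hPx : W.xmin k.castSucc ≤ (W.pts k.castSucc).1 := xmin_le le_rfl
      have hPY : (W.pts k.castSucc).2 ≤ W.ymax k.castSucc := le_ymax le_rfl
      suffices h : W.ymax k.castSucc ≤ (W.pts k.succ).2 ∨
          W.xmax k.castSucc ≤ (W.pts k.succ).1 ∨
          (W.pts k.succ).1 ≤ W.xmin k.castSucc by
        rcases h with h | h | h
        · exact Or.inl (by rw [ymax_succ]; exact (max_eq_right h).symm)
        · exact Or.inr (Or.inl (by rw [xmax_succ]; exact (max_eq_right h).symm))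
        · exact Or.inr (Or.inr (by rw [xmin_succ]; exact (min_eq_right h).symm))
      obtain hstep | hstep | hstep | hstep :
          ((W.pts k.succ).1 = (W.pts k.castSucc).1 + 1 ∧
            (W.pts k.succ).2 = (W.pts k.castSucc).2) ∨
          ((W.pts k.succ).1 = (W.pts k.castSucc).1 - 1 ∧
            (W.pts k.succ).2 = (W.pts k.castSucc).2) ∨
          ((W.pts k.succ).1 = (W.pts k.castSucc).1 ∧
            (W.pts k.succ).2 = (W.pts k.castSucc).2 + 1) ∨
          ((W.pts k.succ).1 = (W.pts k.castSucc).1 ∧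
            (W.pts k.succ).2 = (W.pts k.castSucc).2 - 1) := by omega
      -- East step
      · by_cases hX : W.xmax k.castSucc ≤ (W.pts k.succ).1
        · exact Or.inr (Or.inl hX)
        push_neg at hX
        by_cases hy : (W.pts k.castSucc).2 = W.ymax k.castSucc
        · omega
        rcases ih with h | h | h
        · exact absurd h hy
        · omega
        · exfalso
          by_cases hP0 : (W.pts k.castSucc).2 = 0
          · by_cases h00 : W.pts 0 = W.pts k.castSucc
            · have hk0 : k.castSucc = 0 := by
                by_contra hne
                exact selfAvoid hP (lt_of_le_of_ne (Fin.zero_le _) (Ne.symm hne)) h00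
              have e1 : W.xmax k.castSucc = 0 := by rw [hk0, xmax_zero]
              have e2 : W.xmin k.castSucc = 0 := by rw [hk0, xmin_zero]
              omega
            · have hx0 : W.xmin k.castSucc ≤ 0 := by
                have h' := xmin_le (W := W) (Fin.zero_le k.castSucc)
                omega
              have hxne : W.xmin k.castSucc ≠ 0 := by
                intro he
                exact h00 (Prod.ext (by omega) (by omega))
              refine prudent_hit hP k (t := -(W.xmin k.castSucc)) (by omega)
                (Fin.zero_le _) ?_ ?_
              · have d1 : (W.pts k.succ).1 - (W.pts k.castSucc).1 = 1 := by omega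
                rw [d1, mul_one]; omega
              · have d2 : (W.pts k.succ).2 - (W.pts k.castSucc).2 = 0 := by omega
                rw [d2, mul_zero]; omega
          · obtain ⟨m0, hm0, hm0y⟩ := exists_ymax W k.castSucc
            obtain ⟨j, hj, hjy⟩ := crossing W Prod.snd hgy 0 m0 (W.pts k.castSucc).2
              (by omega) (by omega)
            have hj' : j ≤ m0 := by
              rcases hj with hj | hj
              · exfalso
                have hj0 : j = 0 := le_antisymm hj (Fin.zero_le j)
                rw [hj0] at hjy
                omega
              · exact hj
            have hjle : j ≤ k.castSucc := hj'.trans hm0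
            have hjk : j < k.castSucc := by
              rcases hjle.lt_or_eq with h' | h'
              · exact h'
              · exfalso
                have hm0j : m0 = j := le_antisymm (h' ▸ hm0) hj'
                rw [hm0j] at hm0y
                omega
            by_cases hjx : (W.pts j).1 = W.xmin k.castSucc
            · exact selfAvoid hP hjk (Prod.ext (by omega) (by omega))
            · have hjx' : W.xmin k.castSucc ≤ (W.pts j).1 := xmin_le (le_of_lt hjk)
              refine prudent_hit hP k
                (t := (W.pts j).1 - (W.pts k.castSucc).1) (by omega)
                (le_of_lt hjk) ?_ ?_
              · have d1 : (W.pts k.succ).1 - (W.pts k.castSucc).1 = 1 := by omega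
                rw [d1, mul_one]; omega
              · have d2 : (W.pts k.succ).2 - (W.pts k.castSucc).2 = 0 := by omega
                rw [d2, mul_zero]; omega
      -- West step
      · by_cases hx : (W.pts k.succ).1 ≤ W.xmin k.castSucc
        · exact Or.inr (Or.inr hx)
        push_neg at hx
        by_cases hy : (W.pts k.castSucc).2 = W.ymax k.castSucc
        · omega
        rcases ih with h | h | h
        · exact absurd h hy
        · exfalso
          by_cases hP0 : (W.pts k.castSucc).2 = 0
          · by_cases h00 : W.pts 0 = W.pts k.castSucc
            · have hk0 : k.castSucc = 0 := by
                by_contra hne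
                exact selfAvoid hP (lt_of_le_of_ne (Fin.zero_le _) (Ne.symm hne)) h00
              have e1 : W.xmax k.castSucc = 0 := by rw [hk0, xmax_zero]
              have e2 : W.xmin k.castSucc = 0 := by rw [hk0, xmin_zero]
              omega
            · have hX0 : 0 ≤ W.xmax k.castSucc := by
                have h' := le_xmax (W := W) (Fin.zero_le k.castSucc)
                omega
              have hXne : W.xmax k.castSucc ≠ 0 := by
                intro he
                exact h00 (Prod.ext (by omega) (by omega))
              refine prudent_hit hP k (t := W.xmax k.castSucc) (by omega)
                (Fin.zero_le _) ?_ ?_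
              · have d1 : (W.pts k.succ).1 - (W.pts k.castSucc).1 = -1 := by omega
                rw [d1, mul_neg_one]; omega
              · have d2 : (W.pts k.succ).2 - (W.pts k.castSucc).2 = 0 := by omega
                rw [d2, mul_zero]; omega
          · obtain ⟨m0, hm0, hm0y⟩ := exists_ymax W k.castSucc
            obtain ⟨j, hj, hjy⟩ := crossing W Prod.snd hgy 0 m0 (W.pts k.castSucc).2
              (by omega) (by omega)
            have hj' : j ≤ m0 := by
              rcases hj with hj | hj
              · exfalso
                have hj0 : j = 0 := le_antisymm hj (Fin.zero_le j)
                rw [hj0] at hjy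
                omega
              · exact hj
            have hjle : j ≤ k.castSucc := hj'.trans hm0
            have hjk : j < k.castSucc := by
              rcases hjle.lt_or_eq with h' | h'
              · exact h'
              · exfalso
                have hm0j : m0 = j := le_antisymm (h' ▸ hm0) hj'
                rw [hm0j] at hm0y
                omega
            by_cases hjx : (W.pts j).1 = W.xmax k.castSucc
            · exact selfAvoid hP hjk (Prod.ext (by omega) (by omega))
            · have hjx' : (W.pts j).1 ≤ W.xmax k.castSucc := le_xmax (le_of_lt hjk)
              refine prudent_hit hP k
                (t := (W.pts k.castSucc).1 - (W.pts j).1) (by omega)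
                (le_of_lt hjk) ?_ ?_
              · have d1 : (W.pts k.succ).1 - (W.pts k.castSucc).1 = -1 := by omega
                rw [d1, mul_neg_one]; omega
              · have d2 : (W.pts k.succ).2 - (W.pts k.castSucc).2 = 0 := by omega
                rw [d2, mul_zero]; omega
        · omega
      -- North step
      · rcases ih with h | h | h
        · omega
        · omega
        · omega
      -- South step
      · rcases ih with h | h | h
        · by_cases hX' : (W.pts k.castSucc).1 = W.xmax k.castSucc
          · omega
          by_cases hx' : (W.pts k.castSucc).1 = W.xmin k.castSucc
          · omega
          exfalso
          obtain ⟨m1, hm1, hm1x⟩ := exists_xmin W k.castSucc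
          obtain ⟨m2, hm2, hm2x⟩ := exists_xmax W k.castSucc
          obtain ⟨j, hj, hjx⟩ := crossing W Prod.fst hgx m1 m2 (W.pts k.castSucc).1
            (by omega) (by omega)
          have hjle : j ≤ k.castSucc := by
            rcases hj with hj | hj
            · exact hj.trans hm1
            · exact hj.trans hm2
          have hjk : j < k.castSucc := by
            rcases hjle.lt_or_eq with h' | h'
            · exact h'
            · exfalso
              rcases hj with hj | hj
              · have hmj : m1 = j := le_antisymm (h' ▸ hm1) hj
                rw [hmj] at hm1x
                omega
              · have hmj : m2 = j := le_antisymm (h' ▸ hm2) hj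
                rw [hmj] at hm2x
                omega
          have hjY : (W.pts j).2 ≤ W.ymax k.castSucc := le_ymax (le_of_lt hjk)
          by_cases hjy : (W.pts j).2 = (W.pts k.castSucc).2
          · exact selfAvoid hP hjk (Prod.ext (by omega) (by omega))
          · refine prudent_hit hP k
              (t := (W.pts k.castSucc).2 - (W.pts j).2) (by omega)
              (le_of_lt hjk) ?_ ?_
            · have d1 : (W.pts k.succ).1 - (W.pts k.castSucc).1 = 0 := by omega
              rw [d1, mul_zero]; omega
            · have d2 : (W.pts k.succ).2 - (W.pts k.castSucc).2 = -1 := by omega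
              rw [d2, mul_neg_one]; omega
        · omega
        · omega
  exact ⟨key (Fin.last n), key⟩

end PrudentAdsorption
end
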